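/- Purifier for relations: let D be a finite set, Z a finite-dimensional complex inner product space, δ > 0, and for each x ∈ D let ψ_x ∈ Z be a unit vector and Π_x an orthogonal projection on Z with ‖Π_x ψ_x‖² ≥ δ; set R_x = I_Z − 2Π_x. Then there exist a finite-dimensional complex inner product space H and unit vectors σ_x ∈ Z ⊗ H (x ∈ D) such that (Π_x ⊗ id_H) σ_x = σ_x for every x ∈ D, and γ₂((1 − ⟨σ_x, σ_y⟩)_{x,y∈D} | ((1 − ⟨ψ_x, ψ_y⟩) ⊕ (R_x − R_y))_{x,y∈D}) ≤ 2/δ, where (1 − ⟨ψ_x, ψ_y⟩) ⊕ (R_x − R_y) denotes the block-diagonal linear map on ℂ ⊕ Z given by multiplication by the scalar 1 − ⟨ψ_x, ψ_y⟩ on ℂ and by R_x − R_y on Z. -/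

import Mathlib

noncomputable section

open scoped ENNReal ComplexOrder

/-- A linear endomorphism of a finite-dimensional complex inner product space is unitary. -/
def IsUnitaryMap {E : Type*} [NormedAddCommGroup E] [InnerProductSpace ℂ E]
    [FiniteDimensional ℂ E] (f : E →ₗ[ℂ] E) : Prop :=
  LinearMap.adjoint f ∘ₗ f = LinearMap.id ∧ f ∘ₗ LinearMap.adjoint f = LinearMap.id

/-- Operator norm of a linear map between finite-dimensional inner product spaces. -/
noncomputable def opNorm {E F : Type*} [NormedAddCommGroup E] [InnerProductSpace ℂ E]
    [NormedAddCommGroup F] [InnerProductSpace ℂ F] [FiniteDimensional ℂ E]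
    (f : E →ₗ[ℂ] F) : ℝ :=
  ‖LinearMap.toContinuousLinearMap f‖

/-- A complex scalar viewed as a linear map `ℂ → ℂ`. -/
noncomputable def scalarMap (c : ℂ) : ℂ →ₗ[ℂ] ℂ := c • LinearMap.id

/-- The block-diagonal map `⊕ᵢ Δᵢ` on an `ℓ²`-direct sum of copies of a space. -/
noncomputable def piBlock {ι : Type*} [Fintype ι] {X₁ X₂ : Type*}
    [NormedAddCommGroup X₁] [InnerProductSpace ℂ X₁]
    [NormedAddCommGroup X₂] [InnerProductSpace ℂ X₂]
    (Δ : ι → (X₂ →ₗ[ℂ] X₁)) :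
    PiLp 2 (fun _ : ι => X₂) →ₗ[ℂ] PiLp 2 (fun _ : ι => X₁) :=
  (WithLp.linearEquiv 2 ℂ (∀ _ : ι, X₁)).symm.toLinearMap ∘ₗ
    (LinearMap.pi fun i => Δ i ∘ₗ LinearMap.proj i) ∘ₗ
      (WithLp.linearEquiv 2 ℂ (∀ _ : ι, X₂)).toLinearMap

/-- The relative `γ₂`-norm `γ₂(A | Δ)` of a family `A = (A_{xy} : Z₂ → Z₁)` relative to a
family `Δ = (Δ_{xy} : X₂ → X₁)`: the infimum over `k ∈ ℕ` and factorizations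
`A_{xy} = Υ_x* ∘ (Δ_{xy} ⊗ id_{ℂᵏ}) ∘ Φ_y` of `max (max_x ‖Υ_x‖²) (max_y ‖Φ_y‖²)`,
where `X ⊗ ℂᵏ` is realized as the `ℓ²`-direct sum of `k` copies of `X`.
The infimum of the empty set is `+∞`. -/
noncomputable def relGamma2 {D₁ D₂ : Type*} [Fintype D₁] [Fintype D₂]
    {X₁ X₂ Z₁ Z₂ : Type*}
    [NormedAddCommGroup X₁] [InnerProductSpace ℂ X₁] [FiniteDimensional ℂ X₁]
    [NormedAddCommGroup X₂] [InnerProductSpace ℂ X₂] [FiniteDimensional ℂ X₂]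
    [NormedAddCommGroup Z₁] [InnerProductSpace ℂ Z₁] [FiniteDimensional ℂ Z₁]
    [NormedAddCommGroup Z₂] [InnerProductSpace ℂ Z₂] [FiniteDimensional ℂ Z₂]
    (A : D₁ → D₂ → (Z₂ →ₗ[ℂ] Z₁)) (Δ : D₁ → D₂ → (X₂ →ₗ[ℂ] X₁)) : ℝ≥0∞ :=
  ⨅ (k : ℕ) (Υ : D₁ → (Z₁ →ₗ[ℂ] PiLp 2 (fun _ : Fin k => X₁)))
    (Φ : D₂ → (Z₂ →ₗ[ℂ] PiLp 2 (fun _ : Fin k => X₂)))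
    (_ : ∀ x y, A x y =
      LinearMap.adjoint (Υ x) ∘ₗ piBlock (fun _ : Fin k => Δ x y) ∘ₗ Φ y),
    (⨆ x, ENNReal.ofReal (opNorm (Υ x) ^ 2)) ⊔ (⨆ y, ENNReal.ofReal (opNorm (Φ y) ^ 2))

/-- Block-diagonal direct sum `f ⊕ g` on the `ℓ²`-direct sum of two spaces. -/
noncomputable def dsum {E E' F F' : Type*}
    [NormedAddCommGroup E] [InnerProductSpace ℂ E]
    [NormedAddCommGroup E'] [InnerProductSpace ℂ E']
    [NormedAddCommGroup F] [InnerProductSpace ℂ F]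
    [NormedAddCommGroup F'] [InnerProductSpace ℂ F']
    (f : E →ₗ[ℂ] F) (g : E' →ₗ[ℂ] F') :
    WithLp 2 (E × E') →ₗ[ℂ] WithLp 2 (F × F') :=
  (WithLp.linearEquiv 2 ℂ (F × F')).symm.toLinearMap ∘ₗ
    (LinearMap.prodMap f g) ∘ₗ (WithLp.linearEquiv 2 ℂ (E × E')).toLinearMap

open Finset Matrix
open scoped ComplexConjugate

section Aux

local notation "⟪" x ", " y "⟫" => @inner ℂ _ _ x y

variable {D : Type} [Fintype D] {Z : Type}
    [NormedAddCommGroup Z] [InnerProductSpace ℂ Z] [FiniteDimensional ℂ Z]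

private lemma st18_hadamard_pow_nonneg (w : D → Z) (n : ℕ) (v : D → ℂ) :
    0 ≤ ∑ x : D, ∑ y : D, conj (v x) * v y * (⟪w x, w y⟫ ^ n) := by
  induction n generalizing v with
  | zero =>
    simp only [pow_zero, mul_one]
    have : ∑ x : D, ∑ y : D, conj (v x) * v y = conj (∑ x : D, v x) * (∑ y : D, v y) := by
      rw [map_sum, sum_mul]
      exact Finset.sum_congr rfl fun x _ => by rw [mul_sum]
    rw [this]
    exact star_mul_self_nonneg _
  | succ n ih =>
    classical
    set b := stdOrthonormalBasis ℂ Z with hb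
    have hinner : ∀ x y : D, ⟪w x, w y⟫ =
        ∑ i, conj (b.repr (w x) i) * (b.repr (w y) i) := by
      intro x y
      calc ⟪w x, w y⟫ = ⟪b.repr (w x), b.repr (w y)⟫ := (b.repr.inner_map_map _ _).symm
        _ = ∑ i, conj (b.repr (w x) i) * (b.repr (w y) i) := by
            rw [PiLp.inner_apply]; simp [RCLike.inner_apply, mul_comm]
    have h1 : ∀ x y : D, conj (v x) * v y * (⟪w x, w y⟫ ^ (n+1)) =
        ∑ i, conj (v x * b.repr (w x) i) * (v y * b.repr (w y) i) * (⟪w x, w y⟫ ^ n) := by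
      intro x y
      have h2 : ∑ i, conj (v x * b.repr (w x) i) * (v y * b.repr (w y) i) * (⟪w x, w y⟫ ^ n)
          = (∑ i, conj (b.repr (w x) i) * (b.repr (w y) i)) *
            (conj (v x) * v y * ⟪w x, w y⟫ ^ n) := by
        rw [Finset.sum_mul]
        refine Finset.sum_congr rfl fun i _ => ?_
        simp only [_root_.map_mul]; ring
      rw [h2, ← hinner x y]; ring
    calc ∑ x : D, ∑ y : D, conj (v x) * v y * (⟪w x, w y⟫ ^ (n+1))
        = ∑ x : D, ∑ y : D, ∑ i, conj (v x * b.repr (w x) i) * (v y * b.repr (w y) i) *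
            (⟪w x, w y⟫ ^ n) := by
          exact Finset.sum_congr rfl fun x _ => Finset.sum_congr rfl fun y _ => h1 x y
      _ = ∑ x : D, ∑ i, ∑ y : D, conj (v x * b.repr (w x) i) * (v y * b.repr (w y) i) *
            (⟪w x, w y⟫ ^ n) := Finset.sum_congr rfl fun x _ => Finset.sum_comm
      _ = ∑ i, ∑ x : D, ∑ y : D, conj (v x * b.repr (w x) i) * (v y * b.repr (w y) i) *
            (⟪w x, w y⟫ ^ n) := Finset.sum_comm
      _ ≥ 0 := Finset.sum_nonneg fun i _ => ih _

open scoped MatrixOrder in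
private lemma st18_exists_gram (w : D → Z) (hw : ∀ x y : D, ‖(⟪w x, w y⟫ : ℂ)‖ < 1) :
    ∃ a : D → EuclideanSpace ℂ D, ∀ x y : D, ⟪a x, a y⟫ = (1 - ⟪w x, w y⟫)⁻¹ := by
  classical
  set M : Matrix D D ℂ := Matrix.of fun x y => (1 - ⟪w x, w y⟫)⁻¹ with hM
  have hherm : M.IsHermitian := by
    ext x y
    simp only [Matrix.conjTranspose_apply, hM, Matrix.of_apply, star_inv₀, star_sub, star_one]
    rw [show (star ⟪w y, w x⟫ : ℂ) = ⟪w x, w y⟫ from inner_conj_symm (w x) (w y)]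
  have hsummable : ∀ x y : D, Summable (fun n : ℕ => (⟪w x, w y⟫ : ℂ) ^ n) :=
    fun x y => summable_geometric_of_norm_lt_one (hw x y)
  have hpsd : M.PosSemidef := by
    refine Matrix.PosSemidef.of_dotProduct_mulVec_nonneg hherm fun v => ?_
    have hsum2 : ∀ x y : D,
        Summable (fun n : ℕ => conj (v x) * v y * ((⟪w x, w y⟫ : ℂ) ^ n)) := fun x y =>
      ((hsummable x y).mul_left _)
    have hterm : ∀ x y : D, star (v x) * (M x y * v y)
        = ∑' n : ℕ, conj (v x) * v y * (⟪w x, w y⟫ ^ n) := by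
      intro x y
      have h1 : (M x y : ℂ) = ∑' n : ℕ, ⟪w x, w y⟫ ^ n :=
        (tsum_geometric_of_norm_lt_one (hw x y)).symm
      rw [h1, ← tsum_mul_right, ← tsum_mul_left]
      refine tsum_congr fun n => ?_
      rw [starRingEnd_apply]; ring
    have hform : star v ⬝ᵥ M.mulVec v
        = ∑' n : ℕ, ∑ x : D, ∑ y : D, conj (v x) * v y * (⟪w x, w y⟫ ^ n) := by
      simp only [dotProduct, Matrix.mulVec, Pi.star_apply, Finset.mul_sum]
      calc ∑ x : D, ∑ y : D, star (v x) * (M x y * v y)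
          = ∑ x : D, ∑ y : D, ∑' n : ℕ, conj (v x) * v y * (⟪w x, w y⟫ ^ n) :=
            Finset.sum_congr rfl fun x _ => Finset.sum_congr rfl fun y _ => hterm x y
        _ = ∑ x : D, ∑' n : ℕ, ∑ y : D, conj (v x) * v y * (⟪w x, w y⟫ ^ n) :=
            Finset.sum_congr rfl fun x _ => (Summable.tsum_finsetSum fun y _ => hsum2 x y).symm
        _ = ∑' n : ℕ, ∑ x : D, ∑ y : D, conj (v x) * v y * (⟪w x, w y⟫ ^ n) :=
            (Summable.tsum_finsetSum fun x _ => summable_sum fun y _ => hsum2 x y).symm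
    rw [hform]
    exact tsum_nonneg fun n => st18_hadamard_pow_nonneg w n v
  set s : Matrix D D ℂ := CFC.sqrt M with hs
  have hssa : sᴴ = s := (CFC.sqrt_nonneg M).posSemidef.1
  refine ⟨fun x => (WithLp.toLp 2 (fun i => s i x) : EuclideanSpace ℂ D), fun x y => ?_⟩
  rw [PiLp.inner_apply]
  have h3 : ∀ i : D, ⟪(s i x : ℂ), s i y⟫ = s x i * s i y := by
    intro i
    rw [RCLike.inner_apply, mul_comm]
    congr 1
    rw [starRingEnd_apply, ← Matrix.conjTranspose_apply, hssa]
  rw [Finset.sum_congr rfl fun i _ => h3 i, ← Matrix.mul_apply, CFC.sqrt_mul_sqrt_self M hpsd.nonneg]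
  simp [hM]

private lemma st18_piBlock_apply {ι : Type*} [Fintype ι] {X₁ X₂ : Type*}
    [NormedAddCommGroup X₁] [InnerProductSpace ℂ X₁]
    [NormedAddCommGroup X₂] [InnerProductSpace ℂ X₂]
    (Δ : ι → (X₂ →ₗ[ℂ] X₁)) (v : PiLp 2 (fun _ : ι => X₂)) (i : ι) :
    piBlock Δ v i = Δ i (v i) := rfl

private lemma st18_dsum_apply {E E' F F' : Type*}
    [NormedAddCommGroup E] [InnerProductSpace ℂ E]
    [NormedAddCommGroup E'] [InnerProductSpace ℂ E']
    [NormedAddCommGroup F] [InnerProductSpace ℂ F]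
    [NormedAddCommGroup F'] [InnerProductSpace ℂ F']
    (f : E →ₗ[ℂ] F) (g : E' →ₗ[ℂ] F') (v : WithLp 2 (E × E')) :
    dsum f g v = (WithLp.equiv 2 (F × F')).symm (f v.fst, g v.snd) := rfl

private lemma st18_adjoint_toSpan {F : Type*} [NormedAddCommGroup F] [InnerProductSpace ℂ F]
    [FiniteDimensional ℂ F] (v : F) (u : F) :
    LinearMap.adjoint (LinearMap.toSpanSingleton ℂ F v) u = ⟪v, u⟫ := by
  have h1 : LinearMap.adjoint (LinearMap.toSpanSingleton ℂ F v) u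
      = ⟪(1:ℂ), LinearMap.adjoint (LinearMap.toSpanSingleton ℂ F v) u⟫ := by
    rw [RCLike.inner_apply]; simp
  rw [h1, LinearMap.adjoint_inner_right]
  congr 1
  exact (LinearMap.toSpanSingleton_apply_one ℂ F v)

private lemma st18_opNorm_toSpan {F : Type*} [NormedAddCommGroup F] [InnerProductSpace ℂ F]
    [FiniteDimensional ℂ F] (v : F) :
    opNorm (LinearMap.toSpanSingleton ℂ F v) = ‖v‖ := by
  rw [opNorm]
  apply le_antisymm
  · refine ContinuousLinearMap.opNorm_le_bound _ (norm_nonneg v) fun z => ?_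
    simp [LinearMap.toSpanSingleton_apply, norm_smul, mul_comm]
  · have h2 : LinearMap.toContinuousLinearMap (LinearMap.toSpanSingleton ℂ F v) 1 = v := by
      simp [LinearMap.toSpanSingleton_apply]
    have h3 := (LinearMap.toContinuousLinearMap (LinearMap.toSpanSingleton ℂ F v)).le_opNorm 1
    rw [h2] at h3
    simpa using h3

end Aux

section Main


local notation "⟪" x ", " y "⟫" => @inner ℂ _ _ x y

set_option maxHeartbeats 1600000

/-- Purifier for relations: if `ψ_x` are unit vectors and `Π_x`
orthogonal projections with `‖Π_x ψ_x‖² ≥ δ > 0`, and `R_x = I − 2Π_x`, then there are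
a space `H = ℂᵐ` and unit vectors `σ_x ∈ Z ⊗ H` (realized as the `ℓ²`-sum of `m` copies
of `Z`) with `(Π_x ⊗ id) σ_x = σ_x` and
`γ₂(1 − ⟨σ_x, σ_y⟩ | (1 − ⟨ψ_x, ψ_y⟩) ⊕ (R_x − R_y)) ≤ 2/δ`,
the latter family consisting of block-diagonal maps on `ℂ ⊕ Z`. -/
theorem statement18 {D : Type} [Fintype D] {Z : Type}
    [NormedAddCommGroup Z] [InnerProductSpace ℂ Z] [FiniteDimensional ℂ Z]
    (δ : ℝ) (hδ : 0 < δ)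
    (ψ : D → Z) (hψ : ∀ x, ‖ψ x‖ = 1)
    (P : D → (Z →ₗ[ℂ] Z))
    (hP : ∀ x, LinearMap.adjoint (P x) = P x ∧ P x ∘ₗ P x = P x)
    (hover : ∀ x, δ ≤ ‖P x (ψ x)‖ ^ 2)
    (R : D → (Z →ₗ[ℂ] Z)) (hR : ∀ x, R x = LinearMap.id - (2 : ℂ) • P x) :
    ∃ (m : ℕ) (σ : D → PiLp 2 (fun _ : Fin m => Z)),
      (∀ x, ‖σ x‖ = 1) ∧
      (∀ x, piBlock (fun _ : Fin m => P x) (σ x) = σ x) ∧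
      relGamma2 (fun x y => scalarMap (1 - (inner ℂ (σ x) (σ y) : ℂ)))
          (fun x y => dsum (scalarMap (1 - (inner ℂ (ψ x) (ψ y) : ℂ))) (R x - R y)) ≤
        ENNReal.ofReal (2 / δ) := by
  classical
  -- basic facts about the projections
  have hadj : ∀ (x : D) (u v : Z), ⟪P x u, v⟫ = ⟪u, P x v⟫ := by
    intro x u v
    conv_lhs => rw [← (hP x).1]
    exact LinearMap.adjoint_inner_left (P x) v u
  have hid : ∀ (x : D) (u : Z), P x (P x u) = P x u := by
    intro x u
    have h := DFunLike.congr_fun (hP x).2 u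
    simpa using h
  have hRapp : ∀ (x : D) (u : Z), R x u = u - (2:ℂ) • P x u := by
    intro x u
    rw [hR]
    simp
  set c2 : D → ℝ := fun x => ‖P x (ψ x)‖ ^ 2 with hc2def
  have hc2δ : ∀ x, δ ≤ c2 x := hover
  have hc2pos : ∀ x, 0 < c2 x := fun x => lt_of_lt_of_le hδ (hc2δ x)
  have hψself : ∀ x, ⟪ψ x, ψ x⟫ = 1 := by
    intro x
    rw [inner_self_eq_norm_sq_to_K, hψ x]
    norm_num
  have hPP_self : ∀ x, ⟪P x (ψ x), P x (ψ x)⟫ = ((c2 x : ℝ) : ℂ) := by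
    intro x
    rw [inner_self_eq_norm_sq_to_K]
    push_cast [hc2def]
    norm_num
  have hψPψ : ∀ x, ⟪ψ x, P x (ψ x)⟫ = ((c2 x : ℝ) : ℂ) := by
    intro x
    calc ⟪ψ x, P x (ψ x)⟫ = ⟪ψ x, P x (P x (ψ x))⟫ := by rw [hid]
      _ = ⟪P x (ψ x), P x (ψ x)⟫ := (hadj x (ψ x) (P x (ψ x))).symm
      _ = ((c2 x : ℝ) : ℂ) := hPP_self x
  have hPψψ : ∀ x, ⟪P x (ψ x), ψ x⟫ = ((c2 x : ℝ) : ℂ) := by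
    intro x
    calc ⟪P x (ψ x), ψ x⟫ = ⟪ψ x, P x (ψ x)⟫ := by rw [hadj]
      _ = ((c2 x : ℝ) : ℂ) := hψPψ x
  -- the "bad part" of ψ
  set w : D → Z := fun x => ψ x - P x (ψ x) with hwdef
  have hWval : ∀ x y : D, ⟪w x, w y⟫ =
      ⟪ψ x, ψ y⟫ - ⟪ψ x, P y (ψ y)⟫ - ⟪P x (ψ x), ψ y⟫ + ⟪P x (ψ x), P y (ψ y)⟫ := by
    intro x y
    simp only [hwdef, inner_sub_left, inner_sub_right]
    ring
  have hWxx : ∀ x, ⟪w x, w x⟫ = (((1 - c2 x : ℝ)) : ℂ) := by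
    intro x
    rw [hWval, hψself, hψPψ, hPψψ, hPP_self]
    push_cast
    ring
  have hwnorm2 : ∀ x, ‖w x‖ ^ 2 = 1 - c2 x := by
    intro x
    have h2 : RCLike.re (⟪w x, w x⟫ : ℂ) = 1 - c2 x := by rw [hWxx x]; simp
    rw [← inner_self_eq_norm_sq (𝕜 := ℂ) (w x)]
    exact h2
  have hc2le1 : ∀ x, c2 x ≤ 1 := by
    intro x
    nlinarith [sq_nonneg ‖w x‖, hwnorm2 x]
  have hwlt : ∀ x y : D, ‖(⟪w x, w y⟫ : ℂ)‖ < 1 := by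
    intro x y
    have hcs := norm_inner_le_norm (𝕜 := ℂ) (w x) (w y)
    have hx2 := hwnorm2 x
    have hy2 := hwnorm2 y
    have hxn := norm_nonneg (w x)
    have hyn := norm_nonneg (w y)
    have hxδ := hc2δ x
    have hyδ := hc2δ y
    nlinarith [sq_nonneg (‖w x‖ - ‖w y‖), sq_nonneg (‖w x‖ + ‖w y‖)]
  obtain ⟨a, ha⟩ := st18_exists_gram w hwlt
  have hgW : ∀ x y : D, ⟪a x, a y⟫ * (1 - ⟪w x, w y⟫) = 1 := by
    intro x y
    rw [ha]
    apply inv_mul_cancel₀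
    intro h0
    have h1 : (⟪w x, w y⟫ : ℂ) = 1 := by linear_combination -h0
    have h2 : ‖(⟪w x, w y⟫ : ℂ)‖ = 1 := by rw [h1]; simp
    exact absurd h2 (ne_of_lt (hwlt x y))
  have hgxx : ∀ x, ⟪a x, a x⟫ = (((c2 x)⁻¹ : ℝ) : ℂ) := by
    intro x
    have h := hgW x x
    rw [hWxx] at h
    have h' : ((c2 x : ℝ) : ℂ) * ⟪a x, a x⟫ = 1 := by push_cast at h ⊢; linear_combination h
    rw [Complex.ofReal_inv]
    exact eq_inv_of_mul_eq_one_right h'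
  have hanorm2 : ∀ x, ‖a x‖ ^ 2 = (c2 x)⁻¹ := by
    intro x
    have h2 : RCLike.re (⟪a x, a x⟫ : ℂ) = (c2 x)⁻¹ := by rw [hgxx x]; simp
    rw [← inner_self_eq_norm_sq (𝕜 := ℂ) (a x)]
    exact h2
  -- the purifier
  set m := Fintype.card D with hm
  set ε : Fin m ≃ D := (Fintype.equivFin D).symm with hε
  set σ : D → PiLp 2 (fun _ : Fin m => Z) := fun x =>
    (WithLp.equiv 2 (∀ _ : Fin m, Z)).symm (fun i => a x (ε i) • P x (ψ x)) with hσdef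
  have hσapp : ∀ x i, σ x i = a x (ε i) • P x (ψ x) := fun x i => rfl
  have hainner : ∀ x y : D, ⟪a x, a y⟫ = ∑ j : D, conj (a x j) * a y j := by
    intro x y
    rw [PiLp.inner_apply]
    exact Finset.sum_congr rfl fun j _ => by rw [RCLike.inner_apply, mul_comm]
  have hσinner : ∀ x y : D, ⟪σ x, σ y⟫ = ⟪a x, a y⟫ * ⟪P x (ψ x), P y (ψ y)⟫ := by
    intro x y
    rw [PiLp.inner_apply, hainner]
    calc ∑ i : Fin m, ⟪σ x i, σ y i⟫
        = ∑ i : Fin m, conj (a x (ε i)) * a y (ε i) * ⟪P x (ψ x), P y (ψ y)⟫ := by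
          refine Finset.sum_congr rfl fun i _ => ?_
          rw [hσapp, hσapp, inner_smul_left, inner_smul_right]
          ring
      _ = ∑ j : D, conj (a x j) * a y j * ⟪P x (ψ x), P y (ψ y)⟫ :=
          Equiv.sum_comp ε (fun j => conj (a x j) * a y j * ⟪P x (ψ x), P y (ψ y)⟫)
      _ = (∑ j : D, conj (a x j) * a y j) * ⟪P x (ψ x), P y (ψ y)⟫ :=
          (Finset.sum_mul _ _ _).symm
  refine ⟨m, σ, ?_, ?_, ?_⟩
  · -- unit norm
    intro x
    have h : ⟪σ x, σ x⟫ = 1 := by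
      rw [hσinner, hgxx, hPP_self, ← Complex.ofReal_mul, inv_mul_cancel₀ (ne_of_gt (hc2pos x))]
      norm_num
    have h2 : ‖σ x‖ ^ 2 = 1 := by
      have h2 : RCLike.re (⟪σ x, σ x⟫ : ℂ) = 1 := by rw [h]; simp
      rw [← inner_self_eq_norm_sq (𝕜 := ℂ) (σ x)]
      exact h2
    nlinarith [norm_nonneg (σ x)]
  · -- invariance
    intro x
    ext i
    show piBlock (fun _ : Fin m => P x) (σ x) i = σ x i
    rw [st18_piBlock_apply, hσapp, _root_.map_smul, hid]
  · -- the γ₂ bound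
    set uv : D → WithLp 2 (ℂ × Z) := fun x =>
      (WithLp.equiv 2 (ℂ × Z)).symm ((1:ℂ), (2:ℂ)⁻¹ • R x (ψ x)) with huv
    set vv : D → WithLp 2 (ℂ × Z) := fun y =>
      (WithLp.equiv 2 (ℂ × Z)).symm ((1:ℂ), ψ y) with hvv
    set Υvec : D → PiLp 2 (fun _ : Fin m => WithLp 2 (ℂ × Z)) := fun x =>
      (WithLp.equiv 2 (∀ _ : Fin m, WithLp 2 (ℂ × Z))).symm (fun j => a x (ε j) • uv x)
      with hΥvec
    set Φvec : D → PiLp 2 (fun _ : Fin m => WithLp 2 (ℂ × Z)) := fun y =>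
      (WithLp.equiv 2 (∀ _ : Fin m, WithLp 2 (ℂ × Z))).symm (fun j => a y (ε j) • vv y)
      with hΦvec
    set Υ : D → (ℂ →ₗ[ℂ] PiLp 2 (fun _ : Fin m => WithLp 2 (ℂ × Z))) := fun x =>
      LinearMap.toSpanSingleton ℂ _ (Υvec x) with hΥ
    set Φ : D → (ℂ →ₗ[ℂ] PiLp 2 (fun _ : Fin m => WithLp 2 (ℂ × Z))) := fun y =>
      LinearMap.toSpanSingleton ℂ _ (Φvec y) with hΦ
    -- pointwise descriptions
    have hΥapp : ∀ x j, Υvec x j = a x (ε j) • uv x := fun x j => rfl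
    have hΦapp : ∀ y j, Φvec y j = a y (ε j) • vv y := fun y j => rfl
    have huvfst : ∀ x, (uv x).fst = (1:ℂ) := fun x => rfl
    have huvsnd : ∀ x, (uv x).snd = (2:ℂ)⁻¹ • R x (ψ x) := fun x => rfl
    have hvvfst : ∀ y, (vv y).fst = (1:ℂ) := fun y => rfl
    have hvvsnd : ∀ y, (vv y).snd = ψ y := fun y => rfl
    -- the key query identity
    have hq : ∀ x y : D, ⟪R x (ψ x), (R x - R y) (ψ y)⟫ =
        2 * ⟪ψ x, P y (ψ y)⟫ + 2 * ⟪P x (ψ x), ψ y⟫ - 4 * ⟪P x (ψ x), P y (ψ y)⟫ := by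
      intro x y
      have e1 : ⟪ψ x, P x (ψ y)⟫ = ⟪P x (ψ x), ψ y⟫ := (hadj x (ψ x) (ψ y)).symm
      have e2 : ⟪P x (ψ x), P x (ψ y)⟫ = ⟪P x (ψ x), ψ y⟫ := by
        calc ⟪P x (ψ x), P x (ψ y)⟫ = ⟪ψ x, P x (P x (ψ y))⟫ := hadj x _ _
          _ = ⟪ψ x, P x (ψ y)⟫ := by rw [hid]
          _ = ⟪P x (ψ x), ψ y⟫ := e1
      simp only [LinearMap.sub_apply, hRapp, inner_sub_left, inner_sub_right,
        inner_smul_left, inner_smul_right, e1, e2, map_ofNat]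
      ring
    -- core inner product of a single block
    have hcore : ∀ x y : D,
        ⟪uv x, dsum (scalarMap (1 - ⟪ψ x, ψ y⟫)) (R x - R y) (vv y)⟫ =
          (1 - ⟪ψ x, ψ y⟫) + 2⁻¹ * ⟪R x (ψ x), (R x - R y) (ψ y)⟫ := by
      intro x y
      rw [st18_dsum_apply, WithLp.prod_inner_apply]
      have hfst : ⟪(uv x).fst, ((WithLp.equiv 2 (ℂ × Z)).symm
          (scalarMap (1 - ⟪ψ x, ψ y⟫) ((vv y).fst), (R x - R y) ((vv y).snd))).fst⟫
            = (1 - ⟪ψ x, ψ y⟫) := by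
        rw [huvfst]
        show ⟪(1:ℂ), scalarMap (1 - ⟪ψ x, ψ y⟫) ((vv y).fst)⟫ = _
        rw [hvvfst]
        simp [scalarMap, RCLike.inner_apply]
      have hsnd : ⟪(uv x).snd, ((WithLp.equiv 2 (ℂ × Z)).symm
          (scalarMap (1 - ⟪ψ x, ψ y⟫) ((vv y).fst), (R x - R y) ((vv y).snd))).snd⟫
            = 2⁻¹ * ⟪R x (ψ x), (R x - R y) (ψ y)⟫ := by
        rw [huvsnd]
        show ⟪(2:ℂ)⁻¹ • R x (ψ x), (R x - R y) ((vv y).snd)⟫ = _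
        rw [hvvsnd, inner_smul_left, map_inv₀, map_ofNat]
      exact congrArg₂ (· + ·) hfst hsnd
    -- summing the blocks
    have hsumblocks : ∀ (x y : D) (C : ℂ),
        (∑ j : Fin m, conj (a x (ε j)) * a y (ε j) * C) = ⟪a x, a y⟫ * C := by
      intro x y C
      rw [hainner]
      calc ∑ j : Fin m, conj (a x (ε j)) * a y (ε j) * C
          = ∑ i : D, conj (a x i) * a y i * C :=
            Equiv.sum_comp ε (fun i => conj (a x i) * a y i * C)
        _ = (∑ i : D, conj (a x i) * a y i) * C := (Finset.sum_mul _ _ _).symm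
    -- the factorization identity
    have hfact : ∀ x y : D, scalarMap (1 - ⟪σ x, σ y⟫) =
        LinearMap.adjoint (Υ x) ∘ₗ
          piBlock (fun _ : Fin m => dsum (scalarMap (1 - ⟪ψ x, ψ y⟫)) (R x - R y)) ∘ₗ Φ y := by
      intro x y
      have hterm : ∀ j : Fin m,
          ⟪Υvec x j, piBlock (fun _ : Fin m =>
            dsum (scalarMap (1 - ⟪ψ x, ψ y⟫)) (R x - R y)) (Φvec y) j⟫
          = conj (a x (ε j)) * a y (ε j) *
              ((1 - ⟪ψ x, ψ y⟫) + 2⁻¹ * ⟪R x (ψ x), (R x - R y) (ψ y)⟫) := by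
        intro j
        rw [st18_piBlock_apply, hΥapp, hΦapp, _root_.map_smul, inner_smul_left,
          inner_smul_right, hcore x y]
        ring
      have hRHS : ⟪Υvec x, piBlock (fun _ : Fin m =>
            dsum (scalarMap (1 - ⟪ψ x, ψ y⟫)) (R x - R y)) (Φvec y)⟫
          = ⟪a x, a y⟫ *
              ((1 - ⟪ψ x, ψ y⟫) + 2⁻¹ * ⟪R x (ψ x), (R x - R y) (ψ y)⟫) := by
        rw [PiLp.inner_apply, Finset.sum_congr rfl fun j _ => hterm j, hsumblocks x y]
      apply LinearMap.ext_ring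
      rw [LinearMap.comp_apply, LinearMap.comp_apply]
      have hΦ1 : Φ y 1 = Φvec y := LinearMap.toSpanSingleton_apply_one ℂ _ _
      rw [hΦ1, st18_adjoint_toSpan, hRHS]
      show (1 - ⟪σ x, σ y⟫) • (1:ℂ) = _
      rw [smul_eq_mul, mul_one, hσinner x y, hq x y]
      have key := hgW x y
      rw [hWval x y] at key
      linear_combination -key
    -- norm computations
    have hRψ : ∀ x, ‖R x (ψ x)‖ = 1 := by
      intro x
      have h5 : ⟪R x (ψ x), R x (ψ x)⟫ = 1 := by
        simp only [hRapp, inner_sub_left, inner_sub_right, inner_smul_left,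
          inner_smul_right, hψself, hψPψ, hPψψ, hPP_self, map_ofNat]
        ring
      have h6 : ‖R x (ψ x)‖ ^ 2 = 1 := by
        have h2 : RCLike.re (⟪R x (ψ x), R x (ψ x)⟫ : ℂ) = 1 := by rw [h5]; simp
        rw [← inner_self_eq_norm_sq (𝕜 := ℂ)]
        exact h2
      nlinarith [norm_nonneg (R x (ψ x))]
    have hanormsum : ∀ x, ∑ j : Fin m, ‖a x (ε j)‖ ^ 2 = (c2 x)⁻¹ := by
      intro x
      calc ∑ j : Fin m, ‖a x (ε j)‖ ^ 2 = ∑ i : D, ‖a x i‖ ^ 2 :=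
            Equiv.sum_comp ε (fun i => ‖a x i‖ ^ 2)
        _ = ‖a x‖ ^ 2 := (PiLp.norm_sq_eq_of_L2 (fun _ : D => ℂ) (a x)).symm
        _ = (c2 x)⁻¹ := hanorm2 x
    have huvnorm : ∀ x, ‖uv x‖ ^ 2 = 5 / 4 := by
      intro x
      rw [WithLp.prod_norm_sq_eq_of_L2, huvfst, huvsnd, norm_smul, mul_pow, hRψ]
      norm_num
    have hvvnorm : ∀ y, ‖vv y‖ ^ 2 = 2 := by
      intro y
      rw [WithLp.prod_norm_sq_eq_of_L2, hvvfst, hvvsnd, hψ]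
      norm_num
    have hΥnorm : ∀ x, opNorm (Υ x) ^ 2 = 5 / 4 * (c2 x)⁻¹ := by
      intro x
      rw [hΥ, st18_opNorm_toSpan]
      rw [PiLp.norm_sq_eq_of_L2]
      calc ∑ j : Fin m, ‖Υvec x j‖ ^ 2
          = ∑ j : Fin m, ‖a x (ε j)‖ ^ 2 * ‖uv x‖ ^ 2 := by
            refine Finset.sum_congr rfl fun j _ => ?_
            rw [hΥapp, norm_smul, mul_pow]
        _ = (∑ j : Fin m, ‖a x (ε j)‖ ^ 2) * ‖uv x‖ ^ 2 := (Finset.sum_mul _ _ _).symm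
        _ = 5 / 4 * (c2 x)⁻¹ := by rw [hanormsum, huvnorm]; ring
    have hΦnorm : ∀ y, opNorm (Φ y) ^ 2 = 2 * (c2 y)⁻¹ := by
      intro y
      rw [hΦ, st18_opNorm_toSpan]
      rw [PiLp.norm_sq_eq_of_L2]
      calc ∑ j : Fin m, ‖Φvec y j‖ ^ 2
          = ∑ j : Fin m, ‖a y (ε j)‖ ^ 2 * ‖vv y‖ ^ 2 := by
            refine Finset.sum_congr rfl fun j _ => ?_
            rw [hΦapp, norm_smul, mul_pow]
        _ = (∑ j : Fin m, ‖a y (ε j)‖ ^ 2) * ‖vv y‖ ^ 2 := (Finset.sum_mul _ _ _).symm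
        _ = 2 * (c2 y)⁻¹ := by rw [hanormsum, hvvnorm]; ring
    -- conclude
    calc relGamma2 (fun x y => scalarMap (1 - ⟪σ x, σ y⟫))
          (fun x y => dsum (scalarMap (1 - ⟪ψ x, ψ y⟫)) (R x - R y))
        ≤ (⨆ x, ENNReal.ofReal (opNorm (Υ x) ^ 2)) ⊔
            (⨆ y, ENNReal.ofReal (opNorm (Φ y) ^ 2)) := by
          rw [relGamma2]
          refine iInf_le_of_le m ?_
          refine iInf_le_of_le Υ ?_
          refine iInf_le_of_le Φ ?_
          exact iInf_le_of_le hfact le_rfl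
      _ ≤ ENNReal.ofReal (2 / δ) := by
          have hinv : ∀ x : D, (c2 x)⁻¹ ≤ δ⁻¹ := fun x =>
            inv_anti₀ hδ (hc2δ x)
          have hδinv : (0:ℝ) ≤ δ⁻¹ := le_of_lt (inv_pos.mpr hδ)
          apply sup_le
          · refine iSup_le fun x => ENNReal.ofReal_le_ofReal ?_
            rw [hΥnorm, div_eq_mul_inv 2 δ]
            nlinarith [hinv x, inv_nonneg.mpr (le_of_lt (hc2pos x))]
          · refine iSup_le fun y => ENNReal.ofReal_le_ofReal ?_
            rw [hΦnorm, div_eq_mul_inv 2 δ]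
            nlinarith [hinv y, inv_nonneg.mpr (le_of_lt (hc2pos y))]


end Main

end
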